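/- (Singleton-like bound) Let q be a prime power, m, n positive integers, and let C be a set of m×n matrices over F_q with |C| ≥ 2 and minimum rank distance d. Then |C| ≤ q^{min(m(n-d+1), n(m-d+1))}. -/

import Mathlib

/-- `d` is the minimum rank distance of the code `C` (a set of `m × n` matrices over `F`). -/
def IsMinRankDist {F : Type*} [Field F] [Fintype F] {m n : ℕ}
    (C : Set (Matrix (Fin m) (Fin n) F)) (d : ℕ) : Prop :=
  (∀ c₁ ∈ C, ∀ c₂ ∈ C, c₁ ≠ c₂ → d ≤ (c₁ - c₂).rank) ∧
  ∃ c₁ ∈ C, ∃ c₂ ∈ C, c₁ ≠ c₂ ∧ (c₁ - c₂).rank = d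

lemma rank_le_of_firstCols_zero {F : Type*} [Field F] {m n k : ℕ}
    (A : Matrix (Fin m) (Fin n) F) (hk : k ≤ n)
    (h : ∀ i (j : Fin n), (j : ℕ) < k → A i j = 0) : A.rank ≤ n - k := by
  set B : Matrix (Fin m) (Fin (n - k)) F :=
    A.submatrix id (fun j => ⟨k + (j : ℕ), by omega⟩) with hB
  set P : Matrix (Fin (n - k)) (Fin n) F :=
    fun j' j => if (j : ℕ) = k + (j' : ℕ) then 1 else 0 with hP
  have hAB : A = B * P := by
    funext i j
    simp only [Matrix.mul_apply]
    by_cases hj : (j : ℕ) < k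
    · rw [h i j hj]
      refine (Finset.sum_eq_zero ?_).symm
      intro j' _
      have : ¬ ((j : ℕ) = k + (j' : ℕ)) := by omega
      simp [hP, this]
    · have hj' : (j : ℕ) - k < n - k := by omega
      rw [Finset.sum_eq_single (⟨(j : ℕ) - k, hj'⟩ : Fin (n - k))]
      · have hjj : (j : ℕ) = k + ((j : ℕ) - k) := by omega
        have : A i ⟨k + ((j:ℕ) - k), by omega⟩ = A i j := by
          congr 1; exact Fin.ext (by simp; omega)
        simp [hB, hP, ← hjj, this]
      · intro b _ hb
        have : ¬ ((j : ℕ) = k + (b : ℕ)) := by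
          intro hcon
          exact hb (Fin.ext (by simp; omega))
        simp [hP, this]
      · intro hcon
        exact absurd (Finset.mem_univ _) hcon
  calc A.rank = (B * P).rank := by rw [hAB]
    _ ≤ B.rank := Matrix.rank_mul_le_left B P
    _ ≤ n - k := Matrix.rank_le_width B

/-- Column-puncturing bound: `|C| ≤ q^(m * (n - d + 1))`. -/
lemma card_le_pow_of_minDist {q : ℕ} {F : Type*} [Field F] [Fintype F]
    (hq : Fintype.card F = q) {m n : ℕ}
    (C : Set (Matrix (Fin m) (Fin n) F)) {d : ℕ} (hd1 : 1 ≤ d) (hdn : d ≤ n)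
    (hmin : ∀ c₁ ∈ C, ∀ c₂ ∈ C, c₁ ≠ c₂ → d ≤ (c₁ - c₂).rank) :
    Nat.card C ≤ q ^ (m * (n - d + 1)) := by
  have hle : n - (d - 1) ≤ n := Nat.sub_le _ _
  set f : C → Matrix (Fin m) (Fin (n - (d - 1))) F :=
    fun c => (c : Matrix (Fin m) (Fin n) F).submatrix id
      (fun j => (⟨(j : ℕ), by omega⟩ : Fin n)) with hf
  have hinj : Function.Injective f := by
    intro c₁ c₂ hfe
    by_contra hne
    have hne' : (c₁ : Matrix (Fin m) (Fin n) F) ≠ c₂ := fun h => hne (Subtype.ext h)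
    have hrank := hmin _ c₁.2 _ c₂.2 hne'
    have hzero : ∀ i (j : Fin n), (j : ℕ) < n - (d - 1) →
        ((c₁ : Matrix (Fin m) (Fin n) F) - c₂) i j = 0 := by
      intro i j hj
      have := congrFun (congrFun hfe i) ⟨(j : ℕ), hj⟩
      simp only [hf, Matrix.submatrix_apply, id] at this
      simp [Matrix.sub_apply, this]
    have hb := rank_le_of_firstCols_zero _ (Nat.sub_le _ _) hzero
    have : n - (n - (d - 1)) = d - 1 := by omega
    rw [this] at hb
    omega
  have := Nat.card_le_card_of_injective f hinj
  calc Nat.card C ≤ Nat.card (Matrix (Fin m) (Fin (n - (d - 1))) F) := this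
    _ = q ^ (m * (n - (d - 1))) := by
        rw [Nat.card_eq_fintype_card]
        simp [Matrix, Fintype.card_fun, hq, ← pow_mul, mul_comm]
        refine Fintype.card_eq_nat_card.trans ?_
        rw [Nat.card_fun, Nat.card_fun, Nat.card_fin, Nat.card_fin,
          Nat.card_eq_fintype_card, hq]
        ring
    _ = q ^ (m * (n - d + 1)) := by congr 2; omega

theorem stmt3 (q : ℕ) (F : Type*) [Field F] [Fintype F] (hq : Fintype.card F = q)
    (m n : ℕ) (hm : 0 < m) (hn : 0 < n)
    (C : Set (Matrix (Fin m) (Fin n) F)) (hC : 2 ≤ Nat.card C)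
    (d : ℕ) (hd : IsMinRankDist C d) :
    Nat.card C ≤ q ^ min (m * (n - d + 1)) (n * (m - d + 1)) := by
  obtain ⟨hmin, c₁, hc₁, c₂, hc₂, hne, hrank⟩ := hd
  have hsub : c₁ - c₂ ≠ 0 := sub_ne_zero_of_ne hne
  have hd1 : 1 ≤ d := by
    rw [← hrank]
    refine Nat.one_le_iff_ne_zero.mpr (fun h => hsub ?_)
    have hbot : LinearMap.range (c₁ - c₂).mulVecLin = ⊥ :=
      Submodule.finrank_eq_zero.mp h
    have h0 : (c₁ - c₂).mulVecLin = 0 := LinearMap.range_eq_bot.mp hbot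
    funext i j
    simpa [Matrix.mulVecLin_apply, Matrix.mulVec_single] using
      congrFun (congrArg (fun f => f (Pi.single j 1)) h0) i
  have hdn : d ≤ n := hrank ▸ Matrix.rank_le_width _
  have hdm : d ≤ m := hrank ▸ Matrix.rank_le_height _
  -- first bound
  have h1 : Nat.card C ≤ q ^ (m * (n - d + 1)) :=
    card_le_pow_of_minDist hq C hd1 hdn hmin
  -- second bound via transpose
  have h2 : Nat.card C ≤ q ^ (n * (m - d + 1)) := by
    set C' : Set (Matrix (Fin n) (Fin m) F) := (Matrix.transpose '' C) with hC'
    have hcard : Nat.card C = Nat.card C' := by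
      refine (Nat.card_image_of_injective ?_ C).symm
      intro a b hab
      simpa using congrArg Matrix.transpose hab
    have hmin' : ∀ c₁ ∈ C', ∀ c₂ ∈ C', c₁ ≠ c₂ → d ≤ (c₁ - c₂).rank := by
      rintro _ ⟨a, ha, rfl⟩ _ ⟨b, hb, rfl⟩ hne'
      have : a ≠ b := fun h => hne' (by rw [h])
      have := hmin a ha b hb this
      rwa [← Matrix.transpose_sub, Matrix.rank_transpose] at *
    rw [hcard]
    exact card_le_pow_of_minDist hq C' hd1 hdm hmin'
  have hq2 : 1 ≤ q := by rw [← hq]; exact Fintype.card_pos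
  rcases le_total (m * (n - d + 1)) (n * (m - d + 1)) with h | h
  · rwa [min_eq_left h]
  · rwa [min_eq_right h]
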